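/- Let B be a bicategory and W a class of 1-morphisms satisfying [WB1]–[WB5]. Let Ŵ be the smallest class containing W that is closed under composition and under invertible 2-cells. Then Ŵ satisfies the original bicategory-of-fractions conditions: it contains all identities, is closed under composition, admits squares with invertible fillers over cospans with one leg in Ŵ, admits liftings of 2-cells along arrows of Ŵ with the compatibility condition, and is closed under invertible 2-cells. -/

import Mathlib

open CategoryTheory Bicategory

universe w v u

/-- A class of 1-morphisms in a bicategory. -/
def WClass (B : Type u) [Bicategory.{w, v} B] :=
  ∀ ⦃a b : B⦄, (a ⟶ b) → Prop

namespace WClass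

variable {B : Type u} [Bicategory.{w, v} B]

/-- [WB1]: all identities are in `W`. -/
def WB1 (W : WClass B) : Prop := ∀ a : B, W (𝟙 a)

/-- [WB2]: for composable arrows of `W` there is a pre-composition landing in `W`. -/
def WB2 (W : WClass B) : Prop :=
  ∀ ⦃a b c : B⦄ (vm : a ⟶ b) (wm : b ⟶ c), W vm → W wm →
    ∃ (a' : B) (u : a' ⟶ a), W (u ≫ vm ≫ wm)

/-- [WB3]: squares with invertible fillers over cospans with one leg in `W`. -/
def WB3 (W : WClass B) : Prop :=
  ∀ ⦃a b c : B⦄ (wm : a ⟶ b) (f : c ⟶ b), W wm →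
    ∃ (d : B) (h : d ⟶ a) (vm : d ⟶ c), W vm ∧ Nonempty (h ≫ wm ≅ vm ≫ f)

/-- `β` is a lifting of the 2-cell `η : f ≫ wm ⟶ g ≫ wm` along `wm`, via `u`. -/
def IsLift ⦃a b c : B⦄ (f g : a ⟶ b) (wm : b ⟶ c) (η : f ≫ wm ⟶ g ≫ wm)
    ⦃a' : B⦄ (u : a' ⟶ a) (β : u ≫ f ⟶ u ≫ g) : Prop :=
  β ▷ wm = (α_ u f wm).hom ≫ u ◁ η ≫ (α_ u g wm).inv

/-- [WB4]: existence of liftings of 2-cells along arrows of `W`, together with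
the compatibility of any two such liftings. -/
def WB4 (W : WClass B) : Prop :=
  (∀ ⦃a b c : B⦄ (f g : a ⟶ b) (wm : b ⟶ c), W wm → ∀ η : f ≫ wm ⟶ g ≫ wm,
    ∃ (a' : B) (u : a' ⟶ a), W u ∧ ∃ β : u ≫ f ⟶ u ≫ g, IsLift f g wm η u β) ∧
  (∀ ⦃a b c : B⦄ (f g : a ⟶ b) (wm : b ⟶ c), W wm → ∀ η : f ≫ wm ⟶ g ≫ wm,
    ∀ ⦃a₁ : B⦄ (u₁ : a₁ ⟶ a) (β₁ : u₁ ≫ f ⟶ u₁ ≫ g), W u₁ → IsLift f g wm η u₁ β₁ →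
      ∀ ⦃a₂ : B⦄ (u₂ : a₂ ⟶ a) (β₂ : u₂ ≫ f ⟶ u₂ ≫ g), W u₂ → IsLift f g wm η u₂ β₂ →
        ∃ (d : B) (s : d ⟶ a₁) (t : d ⟶ a₂), W (s ≫ u₁) ∧ W (t ≫ u₂) ∧
          ∃ ε₀ : s ≫ u₁ ≅ t ≫ u₂,
            ((α_ s u₁ f).hom ≫ s ◁ β₁ ≫ (α_ s u₁ g).inv) ≫ ε₀.hom ▷ g =
              ε₀.hom ▷ f ≫ (α_ t u₂ f).hom ≫ t ◁ β₂ ≫ (α_ t u₂ g).inv)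

/-- [WB5]: `W` is closed under invertible 2-cells. -/
def WB5 (W : WClass B) : Prop :=
  ∀ ⦃a b : B⦄ (vm wm : a ⟶ b), W wm → Nonempty (vm ≅ wm) → W vm

end WClass

/-- The closure of a class of 1-morphisms under composition and invertible 2-cells. -/
inductive WClass.Hat {B : Type u} [Bicategory.{w, v} B] (W : WClass B) :
    ∀ ⦃a b : B⦄, (a ⟶ b) → Prop
  | of {a b : B} {f : a ⟶ b} : W f → WClass.Hat W f
  | comp {a b c : B} {f : a ⟶ b} {g : b ⟶ c} :
      WClass.Hat W f → WClass.Hat W g → WClass.Hat W (f ≫ g)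
  | iso {a b : B} {f g : a ⟶ b} : WClass.Hat W f → (g ≅ f) → WClass.Hat W g

/-- The closure `Ŵ` regarded as a class of 1-morphisms. -/
def WClass.hat {B : Type u} [Bicategory.{w, v} B] (W : WClass B) : WClass B :=
  fun _ _ f => WClass.Hat W f


section Auxiliary

namespace WClass

variable {B : Type u} [Bicategory.{w, v} B] {W : WClass B}

lemma hat_wb3 (h3 : W.WB3) : ∀ ⦃a b : B⦄ (wm : a ⟶ b), W.hat wm →
    ∀ ⦃c : B⦄ (f : c ⟶ b),
      ∃ (d : B) (h : d ⟶ a) (vm : d ⟶ c), W.hat vm ∧ Nonempty (h ≫ wm ≅ vm ≫ f) := by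
  intro a b wm hw
  induction hw with
  | of hw =>
    intro c f
    obtain ⟨d, h, vm, hv, ⟨φ⟩⟩ := h3 _ f hw
    exact ⟨d, h, vm, .of hv, ⟨φ⟩⟩
  | comp hw₁ hw₂ ih₁ ih₂ =>
    intro c f₀
    obtain ⟨d₁, h₁, v₁, hv₁, ⟨φ⟩⟩ := ih₂ f₀
    obtain ⟨d₂, h₂, v₂, hv₂, ⟨ψ⟩⟩ := ih₁ h₁
    exact ⟨d₂, h₂, v₂ ≫ v₁, .comp hv₂ hv₁,
      ⟨(α_ _ _ _).symm ≪≫ whiskerRightIso ψ _ ≪≫ α_ _ _ _ ≪≫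
        whiskerLeftIso v₂ φ ≪≫ (α_ _ _ _).symm⟩⟩
  | iso hw e ih =>
    intro c f₀
    obtain ⟨d, h, vm, hv, ⟨φ⟩⟩ := ih f₀
    exact ⟨d, h, vm, hv, ⟨whiskerLeftIso h e ≪≫ φ⟩⟩

end WClass

namespace WClass

variable {B : Type u} [Bicategory.{w, v} B] {W : WClass B}

def WB4' (W : WClass B) : Prop :=
  (∀ ⦃a b c : B⦄ (f g : a ⟶ b) (wm : b ⟶ c), W wm → ∀ η : f ≫ wm ⟶ g ≫ wm,
    ∃ (a' : B) (u : a' ⟶ a), W u ∧ ∃ β : u ≫ f ⟶ u ≫ g, IsLift f g wm η u β)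

lemma hat_lift_exists (h4 : W.WB4') : ∀ ⦃b c : B⦄ (wm : b ⟶ c), W.hat wm →
    ∀ ⦃a : B⦄ (p q : a ⟶ b) (η : p ≫ wm ⟶ q ≫ wm),
      ∃ (a' : B) (u : a' ⟶ a), W.hat u ∧ ∃ β : u ≫ p ⟶ u ≫ q, IsLift p q wm η u β := by
  intro b c wm hw
  induction hw with
  | of hw =>
    intro a p q η
    obtain ⟨a', u, hu, β, hβ⟩ := h4 p q _ hw η
    exact ⟨a', u, .of hu, β, hβ⟩
  | @comp b m c w₁ w₂ hw₁ hw₂ ih₁ ih₂ =>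
    intro a p q η
    obtain ⟨a', u, hu, β, hβ⟩ := ih₂ (p ≫ w₁) (q ≫ w₁)
      ((α_ p w₁ w₂).hom ≫ η ≫ (α_ q w₁ w₂).inv)
    obtain ⟨a'', u', hu', γ, hγ⟩ := ih₁ (u ≫ p) (u ≫ q)
      ((α_ u p w₁).hom ≫ β ≫ (α_ u q w₁).inv)
    refine ⟨a'', u' ≫ u, .comp hu' hu, (α_ u' u p).hom ≫ γ ≫ (α_ u' u q).inv, ?_⟩
    unfold IsLift at hβ hγ ⊢
    simp only [comp_whiskerRight, Bicategory.whiskerRight_comp, whisker_assoc, hγ, hβ,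
      Bicategory.whiskerLeft_comp, Category.assoc]
    bicategory
  | @iso b c g f hw e ih =>
    intro a p q η
    obtain ⟨a', u, hu, β, hβ⟩ := ih p q (p ◁ e.inv ≫ η ≫ q ◁ e.hom)
    refine ⟨a', u, hu, β, ?_⟩
    unfold IsLift at hβ ⊢
    have exch : (u ≫ p) ◁ e.hom ≫ β ▷ g = β ▷ f ≫ (u ≫ q) ◁ e.hom :=
      whisker_exchange β e.hom
    have key : β ▷ f = (u ≫ p) ◁ e.hom ≫ β ▷ g ≫ (u ≫ q) ◁ e.inv := by
      rw [← Category.assoc, exch, Category.assoc, ← Bicategory.whiskerLeft_comp,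
        e.hom_inv_id, Bicategory.whiskerLeft_id, Category.comp_id]
    rw [key, hβ]
    simp only [comp_whiskerLeft, Bicategory.whiskerLeft_comp, Category.assoc,
      Iso.inv_hom_id_assoc, Iso.hom_inv_id_assoc]
    simp only [← Bicategory.whiskerLeft_comp_assoc, e.hom_inv_id, Bicategory.whiskerLeft_id,
      Category.id_comp]
    simp only [← Bicategory.whiskerLeft_comp, e.hom_inv_id, Bicategory.whiskerLeft_id,
      Category.comp_id]

end WClass

namespace WClass

variable {B : Type u} [Bicategory.{w, v} B] {W : WClass B}

def WB4'' (W : WClass B) : Prop :=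
  (∀ ⦃a b c : B⦄ (f g : a ⟶ b) (wm : b ⟶ c), W wm → ∀ η : f ≫ wm ⟶ g ≫ wm,
    ∀ ⦃a₁ : B⦄ (u₁ : a₁ ⟶ a) (β₁ : u₁ ≫ f ⟶ u₁ ≫ g), W u₁ → IsLift f g wm η u₁ β₁ →
      ∀ ⦃a₂ : B⦄ (u₂ : a₂ ⟶ a) (β₂ : u₂ ≫ f ⟶ u₂ ≫ g), W u₂ → IsLift f g wm η u₂ β₂ →
        ∃ (d : B) (s : d ⟶ a₁) (t : d ⟶ a₂), W (s ≫ u₁) ∧ W (t ≫ u₂) ∧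
          ∃ ε₀ : s ≫ u₁ ≅ t ≫ u₂,
            ((α_ s u₁ f).hom ≫ s ◁ β₁ ≫ (α_ s u₁ g).inv) ≫ ε₀.hom ▷ g =
              ε₀.hom ▷ f ≫ (α_ t u₂ f).hom ≫ t ◁ β₂ ≫ (α_ t u₂ g).inv)

lemma cancel_base (h1 : W.WB1) (h4 : W.WB4'') ⦃b c : B⦄ (wm : b ⟶ c) (hw : W wm)
    ⦃x : B⦄ (p q : x ⟶ b) (φ ψ : p ⟶ q) (hφψ : φ ▷ wm = ψ ▷ wm) :
    ∃ (x' : B) (r : x' ⟶ x), W.hat r ∧ r ◁ φ = r ◁ ψ := by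
  have lift₁ : IsLift p q wm (φ ▷ wm) (𝟙 x) ((𝟙 x) ◁ φ) := whisker_assoc _ _ _
  have lift₂ : IsLift p q wm (φ ▷ wm) (𝟙 x) ((𝟙 x) ◁ ψ) := by
    unfold IsLift; rw [hφψ]; exact whisker_assoc _ _ _
  obtain ⟨d, s, t, hs, ht, ε₀, hε₀⟩ := h4 p q wm hw (φ ▷ wm) (𝟙 x) _ (h1 x) lift₁
    (𝟙 x) _ (h1 x) lift₂
  refine ⟨d, s ≫ 𝟙 x, .of hs, ?_⟩
  have e1 : (s ≫ 𝟙 x) ◁ φ ≫ ε₀.hom ▷ q = (s ≫ 𝟙 x) ◁ ψ ≫ ε₀.hom ▷ q := by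
    calc (s ≫ 𝟙 x) ◁ φ ≫ ε₀.hom ▷ q
        = ((α_ s (𝟙 x) p).hom ≫ s ◁ ((𝟙 x) ◁ φ) ≫ (α_ s (𝟙 x) q).inv) ≫ ε₀.hom ▷ q := by
          rw [comp_whiskerLeft]
      _ = ε₀.hom ▷ p ≫ (α_ t (𝟙 x) p).hom ≫ t ◁ ((𝟙 x) ◁ ψ) ≫ (α_ t (𝟙 x) q).inv := hε₀
      _ = ε₀.hom ▷ p ≫ (t ≫ 𝟙 x) ◁ ψ := by rw [comp_whiskerLeft]
      _ = (s ≫ 𝟙 x) ◁ ψ ≫ ε₀.hom ▷ q := (whisker_exchange ε₀.hom ψ).symm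
  exact (cancel_mono (ε₀.hom ▷ q)).1 e1

lemma hat_cancel (h1 : W.WB1) (h4 : W.WB4'') : ∀ ⦃b c : B⦄ (wm : b ⟶ c), W.hat wm →
    ∀ ⦃x : B⦄ (p q : x ⟶ b) (φ ψ : p ⟶ q), φ ▷ wm = ψ ▷ wm →
      ∃ (x' : B) (r : x' ⟶ x), W.hat r ∧ r ◁ φ = r ◁ ψ := by
  intro b c wm hw
  induction hw with
  | of hw => exact fun x p q φ ψ h => cancel_base h1 h4 _ hw p q φ ψ h
  | @comp b m c w₁ w₂ hw₁ hw₂ ih₁ ih₂ =>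
    intro x p q φ ψ h
    have h' : (φ ▷ w₁) ▷ w₂ = (ψ ▷ w₁) ▷ w₂ := by
      rw [Bicategory.whiskerRight_comp, Bicategory.whiskerRight_comp] at h
      rwa [cancel_epi, cancel_mono] at h
    obtain ⟨x', r, hr, hr'⟩ := ih₂ (p ≫ w₁) (q ≫ w₁) (φ ▷ w₁) (ψ ▷ w₁) h'
    have h'' : (r ◁ φ) ▷ w₁ = (r ◁ ψ) ▷ w₁ := by
      rw [whisker_assoc, whisker_assoc, hr']
    obtain ⟨x'', r', hr'', hr'''⟩ := ih₁ (r ≫ p) (r ≫ q) (r ◁ φ) (r ◁ ψ) h''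
    refine ⟨x'', r' ≫ r, .comp hr'' hr, ?_⟩
    rw [comp_whiskerLeft, comp_whiskerLeft, hr''']
  | @iso b c g f hw e ih =>
    intro x p q φ ψ h
    refine ih p q φ ψ ?_
    have e1 := whisker_exchange φ e.hom
    have e2 := whisker_exchange ψ e.hom
    rw [h] at e1
    rw [← e2] at e1
    exact (cancel_epi (p ◁ e.hom)).1 e1

end WClass

namespace WClass

variable {B : Type u} [Bicategory.{w, v} B] {W : WClass B}

lemma hat_compat (h1 : W.WB1) (h3 : W.WB3) (h4 : W.WB4'') :
    ∀ ⦃a b c : B⦄ (f g : a ⟶ b) (wm : b ⟶ c), W.hat wm → ∀ η : f ≫ wm ⟶ g ≫ wm,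
    ∀ ⦃a₁ : B⦄ (u₁ : a₁ ⟶ a) (β₁ : u₁ ≫ f ⟶ u₁ ≫ g), W.hat u₁ → IsLift f g wm η u₁ β₁ →
      ∀ ⦃a₂ : B⦄ (u₂ : a₂ ⟶ a) (β₂ : u₂ ≫ f ⟶ u₂ ≫ g), W.hat u₂ → IsLift f g wm η u₂ β₂ →
        ∃ (d : B) (s : d ⟶ a₁) (t : d ⟶ a₂), W.hat (s ≫ u₁) ∧ W.hat (t ≫ u₂) ∧
          ∃ ε₀ : s ≫ u₁ ≅ t ≫ u₂,
            ((α_ s u₁ f).hom ≫ s ◁ β₁ ≫ (α_ s u₁ g).inv) ≫ ε₀.hom ▷ g =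
              ε₀.hom ▷ f ≫ (α_ t u₂ f).hom ≫ t ◁ β₂ ≫ (α_ t u₂ g).inv := by
  intro a b c f g wm hwm η a₁ u₁ β₁ hu₁ l₁ a₂ u₂ β₂ hu₂ l₂
  obtain ⟨d, s, t, ht, ⟨ζ⟩⟩ := hat_wb3 h3 u₁ hu₁ u₂
  unfold IsLift at l₁ l₂
  have hθ : (((α_ s u₁ f).hom ≫ s ◁ β₁ ≫ (α_ s u₁ g).inv) ≫ ζ.hom ▷ g) ▷ wm =
      (ζ.hom ▷ f ≫ (α_ t u₂ f).hom ≫ t ◁ β₂ ≫ (α_ t u₂ g).inv) ▷ wm := by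
    calc (((α_ s u₁ f).hom ≫ s ◁ β₁ ≫ (α_ s u₁ g).inv) ≫ ζ.hom ▷ g) ▷ wm
        = (α_ (s ≫ u₁) f wm).hom ≫
            (((s ≫ u₁) ◁ η) ≫ ζ.hom ▷ (g ≫ wm)) ≫ (α_ (t ≫ u₂) g wm).inv := by
          simp only [comp_whiskerRight, whisker_assoc, l₁, comp_whiskerLeft,
            Bicategory.whiskerLeft_comp, Category.assoc]
          bicategory
      _ = (α_ (s ≫ u₁) f wm).hom ≫
            (ζ.hom ▷ (f ≫ wm) ≫ ((t ≫ u₂) ◁ η)) ≫ (α_ (t ≫ u₂) g wm).inv := by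
          rw [whisker_exchange]
      _ = (ζ.hom ▷ f ≫ (α_ t u₂ f).hom ≫ t ◁ β₂ ≫ (α_ t u₂ g).inv) ▷ wm := by
          simp only [comp_whiskerRight, whisker_assoc, l₂, comp_whiskerLeft,
            Bicategory.whiskerLeft_comp, Category.assoc]
          bicategory
  obtain ⟨d', r, hr, hrθ⟩ := hat_cancel h1 h4 wm hwm _ _ _ _ hθ
  refine ⟨d', r ≫ s, r ≫ t, .iso (.comp hr (.iso (.comp ht hu₂) ζ)) (α_ r s u₁),
    .iso (.comp hr (.comp ht hu₂)) (α_ r t u₂),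
    α_ r s u₁ ≪≫ whiskerLeftIso r ζ ≪≫ (α_ r t u₂).symm, ?_⟩
  calc ((α_ (r ≫ s) u₁ f).hom ≫ (r ≫ s) ◁ β₁ ≫ (α_ (r ≫ s) u₁ g).inv) ≫
        (α_ r s u₁ ≪≫ whiskerLeftIso r ζ ≪≫ (α_ r t u₂).symm).hom ▷ g
      = ((α_ r s u₁).hom ▷ f ≫ (α_ r (s ≫ u₁) f).hom) ≫
          (r ◁ (((α_ s u₁ f).hom ≫ s ◁ β₁ ≫ (α_ s u₁ g).inv) ≫ ζ.hom ▷ g)) ≫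
          ((α_ r (t ≫ u₂) g).inv ≫ (α_ r t u₂).inv ▷ g) := by
        simp only [Iso.trans_hom, Iso.symm_hom, whiskerLeftIso_hom, comp_whiskerRight,
          comp_whiskerLeft, whisker_assoc, Bicategory.whiskerLeft_comp, Category.assoc]
        bicategory
    _ = ((α_ r s u₁).hom ▷ f ≫ (α_ r (s ≫ u₁) f).hom) ≫
          (r ◁ (ζ.hom ▷ f ≫ (α_ t u₂ f).hom ≫ t ◁ β₂ ≫ (α_ t u₂ g).inv)) ≫
          ((α_ r (t ≫ u₂) g).inv ≫ (α_ r t u₂).inv ▷ g) := by rw [hrθ]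
    _ = (α_ r s u₁ ≪≫ whiskerLeftIso r ζ ≪≫ (α_ r t u₂).symm).hom ▷ f ≫
          (α_ (r ≫ t) u₂ f).hom ≫ (r ≫ t) ◁ β₂ ≫ (α_ (r ≫ t) u₂ g).inv := by
        simp only [Iso.trans_hom, Iso.symm_hom, whiskerLeftIso_hom, comp_whiskerRight,
          comp_whiskerLeft, whisker_assoc, Bicategory.whiskerLeft_comp, Category.assoc]
        bicategory

end WClass

end Auxiliary

theorem statement6 {B : Type u} [Bicategory.{w, v} B] (W : WClass B)
    (h1 : W.WB1) (h2 : W.WB2) (h3 : W.WB3) (h4 : W.WB4) (h5 : W.WB5) :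
    (W.hat).WB1 ∧
    (∀ ⦃a b c : B⦄ (f : a ⟶ b) (g : b ⟶ c), W.hat f → W.hat g → W.hat (f ≫ g)) ∧
    (W.hat).WB3 ∧ (W.hat).WB4 ∧ (W.hat).WB5 := by
  refine ⟨fun a => .of (h1 a), fun a b c f g hf hg => .comp hf hg, ?_, ?_, ?_⟩
  · intro a b c wm f hw
    exact WClass.hat_wb3 h3 wm hw f
  · constructor
    · intro a b c f g wm hw η
      exact WClass.hat_lift_exists h4.1 wm hw f g η
    · intro a b c f g wm hw η a₁ u₁ β₁ hu₁ l₁ a₂ u₂ β₂ hu₂ l₂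
      exact WClass.hat_compat h1 h3 h4.2 f g wm hw η u₁ β₁ hu₁ l₁ u₂ β₂ hu₂ l₂
  · rintro a b vm wm hw ⟨e⟩
    exact .iso hw e
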